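/- Define F_r := Σ_{m=0}^{r} (−1)^m Σ_{ρ ⊢ m} a_{r+3}(\bar{ρ⁺}), where a_{r+3}(λ) counts tilings of a convex (r+3)-gon of shape λ and \bar{ρ⁺} = ρ⁺ ∪ 1^{r+1−|ρ⁺|} is the triangle-completion to weight r+1 (the term is zero if |ρ⁺| > r+1). Then F_r = 1 for every r ≥ 0. -/

import Mathlib

open scoped Classical

noncomputable section

/-- `μ⁺`: increase every part of the partition by one. -/
def pplus (μ : Multiset ℕ) : Multiset ℕ := μ.map (· + 1)

/-- `μ⁻`: decrease every part by one, deleting the parts that become zero. -/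
def pminus (μ : Multiset ℕ) : Multiset ℕ := (μ.map (· - 1)).filter (· ≠ 0)

/-- triangle completion `\bar{γ}^m`: pad with parts equal to 1 up to weight `m`. -/
def pcomp (m : ℕ) (γ : Multiset ℕ) : Multiset ℕ := γ + Multiset.replicate (m - γ.sum) 1

namespace Polygon

/-- `{a,b}` (with `a < b`) is a diagonal of the convex `n`-gon with vertices `0,…,n-1`:
non-adjacent pair of vertices. -/
def IsDiag (n : ℕ) (a b : Fin n) : Prop :=
  a.val + 2 ≤ b.val ∧ ¬(a.val = 0 ∧ b.val + 1 = n)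

/-- The type of diagonals of the convex `n`-gon, as ordered pairs. -/
abbrev Diag (n : ℕ) := {p : Fin n × Fin n // IsDiag n p.1 p.2}

/-- Two diagonals cross iff their endpoints strictly interleave around the polygon. -/
def Cross {n : ℕ} (d e : Diag n) : Prop :=
  (d.1.1.val < e.1.1.val ∧ e.1.1.val < d.1.2.val ∧ d.1.2.val < e.1.2.val) ∨
  (e.1.1.val < d.1.1.val ∧ d.1.1.val < e.1.2.val ∧ e.1.2.val < d.1.2.val)

/-- A tiling of the `n`-gon: a set of pairwise non-crossing diagonals. -/
def IsTiling (n : ℕ) (T : Finset (Diag n)) : Prop :=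
  ∀ d ∈ T, ∀ e ∈ T, ¬ Cross d e

/-- The diagonal `d` separates the vertices `x` and `y`: they lie strictly on opposite
sides of `d`. -/
def Sep {n : ℕ} (d : Diag n) (x y : Fin n) : Prop :=
  ((d.1.1.val < x.val ∧ x.val < d.1.2.val) ∧ (y.val < d.1.1.val ∨ d.1.2.val < y.val)) ∨
  ((d.1.1.val < y.val ∧ y.val < d.1.2.val) ∧ (x.val < d.1.1.val ∨ d.1.2.val < x.val))

/-- No diagonal of `T` separates any two elements of `S`. -/
def NonSepSet (n : ℕ) (T : Finset (Diag n)) (S : Finset (Fin n)) : Prop :=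
  ∀ x ∈ S, ∀ y ∈ S, ∀ d ∈ T, ¬ Sep d x y

/-- A tile of the tiling `T`: a maximal set of vertices not separated by any diagonal of
`T` (the vertex set of a face of the dissection). -/
def IsTile (n : ℕ) (T : Finset (Diag n)) (S : Finset (Fin n)) : Prop :=
  NonSepSet n T S ∧ ∀ S' : Finset (Fin n), S ⊆ S' → NonSepSet n T S' → S' = S

/-- The set of tiles of `T`. -/
def tiles (n : ℕ) (T : Finset (Diag n)) : Finset (Finset (Fin n)) :=
  Finset.univ.filter (IsTile n T)

/-- The shape of a tiling: one part `i` for each tile that is an `(i+2)`-gon. -/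
def shape (n : ℕ) (T : Finset (Diag n)) : Multiset ℕ :=
  (tiles n T).val.map (fun S => S.card - 2)

/-- `a n λ`: the number of tilings of the `n`-gon of shape `λ`. -/
def a (n : ℕ) (lam : Multiset ℕ) : ℕ :=
  (Finset.univ.filter (fun T : Finset (Diag n) => IsTiling n T ∧ shape n T = lam)).card

/-- Number of tilings of the `n`-gon using exactly `k` diagonals. -/
def tcount (n k : ℕ) : ℕ :=
  (Finset.univ.filter (fun T : Finset (Diag n) => IsTiling n T ∧ T.card = k)).card

/-- A flip: remove a diagonal `d`, so that a quadrilateral tile `Q` appears, and insert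
the other diagonal `d'` of `Q`. -/
def Flip (n : ℕ) (T T' : Finset (Diag n)) : Prop :=
  ∃ d d' : Diag n, d ∈ T ∧ d ≠ d' ∧ T' = insert d' (T.erase d) ∧
    ∃ Q : Finset (Fin n), IsTile n (T.erase d) Q ∧ Q.card = 4 ∧
      d.1.1 ∈ Q ∧ d.1.2 ∈ Q ∧ d'.1.1 ∈ Q ∧ d'.1.2 ∈ Q

/-- Flip equivalence: the equivalence relation generated by flips. -/
def FlipEquiv (n : ℕ) : Finset (Diag n) → Finset (Diag n) → Prop :=
  Relation.EqvGen (Flip n)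

/-- Flip equivalence restricted to the tilings of shape `λ`. -/
def flipSetoid (n : ℕ) (lam : Multiset ℕ) :
    Setoid {T : Finset (Diag n) // IsTiling n T ∧ shape n T = lam} :=
  Setoid.comap Subtype.val ⟨FlipEquiv n, Relation.EqvGen.is_equivalence _⟩

/-- `ae n λ`: the number of flip-equivalence classes of tilings of the `n`-gon of shape `λ`. -/
def ae (n : ℕ) (lam : Multiset ℕ) : ℕ := Nat.card (Quotient (flipSetoid n lam))

/-- Adjacency of triangular tiles: sharing an edge (two vertices). -/
def triSetoid (n : ℕ) (T : Finset (Diag n)) :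
    Setoid {S : Finset (Fin n) // S ∈ tiles n T ∧ S.card = 3} :=
  ⟨Relation.EqvGen (fun A B => (A.val ∩ B.val).card = 2), Relation.EqvGen.is_equivalence _⟩

/-- `f⁺(T)`: the multiset of numbers of triangles in the maximal triangulated regions
(= connected components of the adjacency relation on triangular tiles). -/
def fplus (n : ℕ) (T : Finset (Diag n)) : Multiset ℕ :=
  (Finset.univ : Finset (Quotient (triSetoid n T))).val.map
    (fun c => Nat.card {v // Quotient.mk (triSetoid n T) v = c})

/-- `f(T) = f⁺(T)⁻`. -/
def fval (n : ℕ) (T : Finset (Diag n)) : Multiset ℕ := pminus (fplus n T)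

/-- `a_{λ,ν}`: number of tilings of shape `λ` with `f`-value `ν`. -/
def aln (n : ℕ) (lam nu : Multiset ℕ) : ℕ :=
  (Finset.univ.filter
    (fun T : Finset (Diag n) => IsTiling n T ∧ shape n T = lam ∧ fval n T = nu)).card

/-- Flip equivalence restricted to tilings of shape `λ` and `f`-value `ν`. -/
def flipSetoidLN (n : ℕ) (lam nu : Multiset ℕ) :
    Setoid {T : Finset (Diag n) // IsTiling n T ∧ shape n T = lam ∧ fval n T = nu} :=
  Setoid.comap Subtype.val ⟨FlipEquiv n, Relation.EqvGen.is_equivalence _⟩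

/-- `ae_{λ,ν}`: number of flip classes of tilings of shape `λ` with `f`-value `ν`. -/
def aeln (n : ℕ) (lam nu : Multiset ℕ) : ℕ := Nat.card (Quotient (flipSetoidLN n lam nu))

end Polygon

section Part1

lemma sum_map_pred (s : Multiset ℕ) (h : ∀ x ∈ s, 1 ≤ x) :
    (s.map (· - 1)).sum + s.card = s.sum := by
  induction s using Multiset.induction with
  | empty => simp
  | cons a s ih =>
    simp only [Multiset.map_cons, Multiset.sum_cons, Multiset.card_cons]
    have ha : 1 ≤ a := h a (Multiset.mem_cons_self a s)
    have := ih (fun x hx => h x (Multiset.mem_cons_of_mem hx))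
    omega

lemma sum_map_succ (s : Multiset ℕ) : (s.map (· + 1)).sum = s.sum + s.card := by
  induction s using Multiset.induction with
  | empty => simp
  | cons a s ih =>
    simp only [Multiset.map_cons, Multiset.sum_cons, Multiset.card_cons]
    omega

lemma partition_count (r m : ℕ) (lam : Multiset ℕ) (h1 : ∀ x ∈ lam, 1 ≤ x)
    (h2 : lam.sum = r + 1) :
    ((Finset.univ.filter
      (fun ρ : Nat.Partition m => pcomp (r+1) (pplus ρ.parts) = lam)).card : ℤ)
    = if m + lam.card = r + 1 then 1 else 0 := by
  classical
  set γ : Multiset ℕ := lam.filter (fun x => x ≠ 1) with hγ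
  have hγ2 : ∀ x ∈ γ, 2 ≤ x := by
    intro x hx
    rw [hγ, Multiset.mem_filter] at hx
    have := h1 x hx.1
    have := hx.2
    omega
  have hsplit : γ + Multiset.replicate (lam.count 1) 1 = lam := by
    have h' : lam.filter (fun x => x = 1) = Multiset.replicate (lam.count 1) 1 := by
      rw [Multiset.filter_eq']
    rw [hγ, ← h', add_comm]
    exact Multiset.filter_add_not _ _
  have hγsum : γ.sum + lam.count 1 = lam.sum := by
    conv_rhs => rw [← hsplit]
    simp [Multiset.sum_replicate]
  have hγcard : γ.card + lam.count 1 = lam.card := by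
    conv_rhs => rw [← hsplit]
    simp
  have hγcs : γ.card ≤ γ.sum := by
    have := Multiset.card_nsmul_le_sum (s := γ) (a := 1)
      (fun x hx => by have := hγ2 x hx; omega)
    simpa using this
  -- key: any solution forces the canonical shape
  have key : ∀ ρ : Nat.Partition m, pcomp (r+1) (pplus ρ.parts) = lam →
      ρ.parts = γ.map (· - 1) ∧ m + lam.card = r + 1 := by
    intro ρ hρ
    set g : Multiset ℕ := pplus ρ.parts with hg
    have hg2 : ∀ x ∈ g, 2 ≤ x := by
      intro x hx
      rw [hg, pplus] at hx
      rw [Multiset.mem_map] at hx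
      obtain ⟨y, hy, rfl⟩ := hx
      have := ρ.parts_pos hy
      omega
    have hgsum : g.sum = m + ρ.parts.card := by
      rw [hg, pplus, sum_map_succ, ρ.parts_sum]
    have hgcard : g.card = ρ.parts.card := by rw [hg, pplus]; simp
    rw [pcomp] at hρ
    have hgle : g.sum ≤ r + 1 := by
      by_contra hlt
      have : r + 1 - g.sum = 0 := by omega
      rw [this] at hρ
      simp at hρ
      rw [← hρ] at h2
      omega
    have hfilg : lam.filter (fun x => x ≠ 1) = g := by
      rw [← hρ, Multiset.filter_add]
      have e1 : Multiset.filter (fun x => x ≠ 1) g = g :=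
        Multiset.filter_eq_self.2 (fun x hx => by have := hg2 x hx; omega)
      have e2 : Multiset.filter (fun x => x ≠ 1) (Multiset.replicate (r + 1 - g.sum) 1)
          = 0 := by
        apply Multiset.filter_eq_nil.2
        intro x hx
        rw [Multiset.eq_of_mem_replicate hx]
        simp
      rw [e1, e2, add_zero]
    have hγg : γ = g := by rw [hγ, hfilg]
    constructor
    · have : γ.map (· - 1) = (ρ.parts.map (· + 1)).map (· - 1) := by
        rw [hγg, hg, pplus]
      rw [this, Multiset.map_map]
      have : ((· - 1) ∘ (· + 1) : ℕ → ℕ) = id := by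
        funext x; simp
      rw [this, Multiset.map_id]
    · have hlamsum : lam.sum = g.sum + (r + 1 - g.sum) := by
        rw [← hρ]; simp [Multiset.sum_replicate]
      have hlamcard : lam.card = g.card + (r + 1 - g.sum) := by
        rw [← hρ]; simp
      omega
  by_cases hm : m + lam.card = r + 1
  · rw [if_pos hm]
    -- construct the canonical partition
    have hpos : ∀ x ∈ γ.map (· - 1), 0 < x := by
      intro x hx
      rw [Multiset.mem_map] at hx
      obtain ⟨y, hy, rfl⟩ := hx
      have := hγ2 y hy
      omega
    have hsum : (γ.map (· - 1)).sum = m := by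
      have := sum_map_pred γ (fun x hx => (hγ2 x hx).trans' (by omega))
      omega
    set ρ₀ : Nat.Partition m := ⟨γ.map (· - 1), fun {x} hx => hpos x hx, hsum⟩ with hρ₀
    have hρ₀mem : pcomp (r+1) (pplus ρ₀.parts) = lam := by
      have hpp : pplus ρ₀.parts = γ := by
        rw [hρ₀, pplus]
        simp only [Multiset.map_map]
        have : ∀ x ∈ γ, ((· + 1) ∘ (· - 1)) x = id x := by
          intro x hx; have := hγ2 x hx
          simp only [Function.comp_apply, id_eq]; omega
        rw [Multiset.map_congr rfl this, Multiset.map_id]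
      rw [pcomp, hpp]
      have : r + 1 - γ.sum = lam.count 1 := by omega
      rw [this, hsplit]
    have : (Finset.univ.filter
        (fun ρ : Nat.Partition m => pcomp (r+1) (pplus ρ.parts) = lam)) = {ρ₀} := by
      ext ρ
      simp only [Finset.mem_filter, Finset.mem_univ, true_and, Finset.mem_singleton]
      constructor
      · intro hρ
        have := (key ρ hρ).1
        apply Nat.Partition.ext
        rw [this, hρ₀]
      · rintro rfl; exact hρ₀mem
    rw [this]
    simp
  · rw [if_neg hm]
    have : (Finset.univ.filter
        (fun ρ : Nat.Partition m => pcomp (r+1) (pplus ρ.parts) = lam)) = ∅ := by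
      ext ρ
      simp only [Finset.mem_filter, Finset.mem_univ, true_and, Finset.notMem_empty,
        iff_false]
      intro hρ
      exact hm (key ρ hρ).2
    rw [this]
    simp

end Part1
section Part2

open Polygon

variable {n : ℕ}

/-- closed "inside" of a diagonal -/
def InF (n : ℕ) (d : Diag n) : Finset (Fin n) :=
  Finset.univ.filter (fun x => d.1.1.val ≤ x.val ∧ x.val ≤ d.1.2.val)

/-- closed "outside" of a diagonal -/
def OutF (n : ℕ) (d : Diag n) : Finset (Fin n) :=
  Finset.univ.filter (fun x => x.val ≤ d.1.1.val ∨ d.1.2.val ≤ x.val)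

lemma mem_InF {d : Diag n} {x : Fin n} :
    x ∈ InF n d ↔ d.1.1.val ≤ x.val ∧ x.val ≤ d.1.2.val := by
  simp [InF]

lemma mem_OutF {d : Diag n} {x : Fin n} :
    x ∈ OutF n d ↔ x.val ≤ d.1.1.val ∨ d.1.2.val ≤ x.val := by
  simp [OutF]

lemma diag_ext {d e : Diag n} (h1 : d.1.1.val = e.1.1.val) (h2 : d.1.2.val = e.1.2.val) :
    d = e := by
  apply Subtype.ext
  apply Prod.ext <;> [exact Fin.ext h1; exact Fin.ext h2]

lemma isTiling_subset {T T' : Finset (Diag n)} (h : T' ⊆ T) (ht : IsTiling n T) :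
    IsTiling n T' := fun d hd e he => ht d (h hd) e (h he)

lemma nonsep_iff {T : Finset (Diag n)} {S : Finset (Fin n)} :
    NonSepSet n T S ↔ ∀ d ∈ T, (∀ x ∈ S, x ∈ InF n d) ∨ (∀ x ∈ S, x ∈ OutF n d) := by
  constructor
  · intro h d hd
    by_contra hc
    push_neg at hc
    obtain ⟨⟨x, hx, hx2⟩, ⟨y, hy, hy2⟩⟩ := hc
    rw [mem_InF] at hx2
    rw [mem_OutF] at hy2
    refine h y hy x hx d hd (Or.inl ⟨⟨?_, ?_⟩, ?_⟩) <;> omega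
  · intro h x hx y hy d hd hsep
    rcases h d hd with h' | h'
    · have h1 := mem_InF.1 (h' x hx)
      have h2 := mem_InF.1 (h' y hy)
      rcases hsep with ⟨⟨u1, u2⟩, u3⟩ | ⟨⟨u1, u2⟩, u3⟩ <;> omega
    · have h1 := mem_OutF.1 (h' x hx)
      have h2 := mem_OutF.1 (h' y hy)
      rcases hsep with ⟨⟨u1, u2⟩, u3⟩ | ⟨⟨u1, u2⟩, u3⟩ <;> omega

lemma mem_tiles {T : Finset (Diag n)} {S : Finset (Fin n)} :
    S ∈ tiles n T ↔ IsTile n T S := by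
  simp [tiles]

lemma exists_tile (T : Finset (Diag n)) (S : Finset (Fin n)) (hS : NonSepSet n T S) :
    ∃ M, IsTile n T M ∧ S ⊆ M := by
  classical
  set F : Finset (Finset (Fin n)) :=
    Finset.univ.filter (fun S' => S ⊆ S' ∧ NonSepSet n T S') with hF
  have hne : F.Nonempty := ⟨S, by simp [hF, hS]⟩
  obtain ⟨M, hM, hmax⟩ := F.exists_max_image Finset.card hne
  rw [hF, Finset.mem_filter] at hM
  refine ⟨M, ⟨hM.2.2, ?_⟩, hM.2.1⟩
  intro S'' hsub hns
  have hS'' : S'' ∈ F := by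
    rw [hF, Finset.mem_filter]
    exact ⟨Finset.mem_univ _, hM.2.1.trans hsub, hns⟩
  exact (Finset.eq_of_subset_of_card_le hsub (hmax S'' hS'')).symm

lemma tiles_empty (hn : 3 ≤ n) : tiles n (∅ : Finset (Diag n)) = {Finset.univ} := by
  ext S
  rw [mem_tiles, Finset.mem_singleton]
  constructor
  · intro ⟨h1, h2⟩
    exact (h2 Finset.univ (Finset.subset_univ S)
      (fun x _ y _ d hd => by simp at hd)).symm ▸ rfl
  · rintro rfl
    exact ⟨fun x _ y _ d hd => by simp at hd,
      fun S'' hsub _ => Finset.eq_of_subset_of_card_le (Finset.subset_univ S'')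
        (Finset.card_le_card hsub) |>.symm ▸ (Finset.univ_subset_iff.1 hsub) ▸ rfl⟩

lemma three_le_card {S : Finset (Fin n)} {u v w : Fin n} (hu : u ∈ S) (hv : v ∈ S)
    (hw : w ∈ S) (huv : u ≠ v) (huw : u ≠ w) (hvw : v ≠ w) : 3 ≤ S.card := by
  have hsub : ({u, v, w} : Finset (Fin n)) ⊆ S := by
    intro x hx
    simp only [Finset.mem_insert, Finset.mem_singleton] at hx
    rcases hx with rfl | rfl | rfl <;> assumption
  have : ({u, v, w} : Finset (Fin n)).card = 3 := by
    rw [Finset.card_insert_of_notMem (by simp [huv, huw]),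
      Finset.card_insert_of_notMem (by simp [hvw]), Finset.card_singleton]
  calc 3 = ({u, v, w} : Finset (Fin n)).card := this.symm
  _ ≤ S.card := Finset.card_le_card hsub

end Part2
section Part2b

open Polygon

variable {n : ℕ} {T : Finset (Diag n)} {d : Diag n}

/-- trichotomy for diagonals of `T` other than a minimal one `d` -/
lemma ear_tri (hT : IsTiling n T) (hd : d ∈ T)
    (hmin : ∀ e ∈ T, d.1.2.val - d.1.1.val ≤ e.1.2.val - e.1.1.val)
    {e : Diag n} (he : e ∈ T.erase d) :
    e.1.2.val ≤ d.1.1.val ∨ d.1.2.val ≤ e.1.1.val ∨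
      (e.1.1.val ≤ d.1.1.val ∧ d.1.2.val ≤ e.1.2.val ∧
        ¬(e.1.1.val = d.1.1.val ∧ e.1.2.val = d.1.2.val)) := by
  have hne : e ≠ d := Finset.ne_of_mem_erase he
  have heT : e ∈ T := Finset.mem_of_mem_erase he
  have h1 : ¬ Cross d e := hT d hd e heT
  have h2 : ¬ Cross e d := hT e heT d hd
  have hm := hmin e heT
  have hd2 := d.2.1
  have he2 := e.2.1
  have hvne : ¬(e.1.1.val = d.1.1.val ∧ e.1.2.val = d.1.2.val) :=
    fun ⟨u, v⟩ => hne (diag_ext u v)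
  simp only [Cross, not_or] at h1 h2
  omega

/-- `InF d` is non-separated by `T.erase d` -/
lemma ear_in_nonsep (hT : IsTiling n T) (hd : d ∈ T)
    (hmin : ∀ e ∈ T, d.1.2.val - d.1.1.val ≤ e.1.2.val - e.1.1.val) :
    NonSepSet n (T.erase d) (InF n d) := by
  rw [nonsep_iff]
  intro e he
  rcases ear_tri hT hd hmin he with h | h | h
  · right; intro x hx; rw [mem_InF] at hx; rw [mem_OutF]; omega
  · right; intro x hx; rw [mem_InF] at hx; rw [mem_OutF]; omega
  · left; intro x hx; rw [mem_InF] at hx; rw [mem_InF]; omega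

/-- `InF d` is non-separated by `T` -/
lemma ear_in_nonsep' (hT : IsTiling n T) (hd : d ∈ T)
    (hmin : ∀ e ∈ T, d.1.2.val - d.1.1.val ≤ e.1.2.val - e.1.1.val) :
    NonSepSet n T (InF n d) := by
  rw [nonsep_iff]
  intro e he
  by_cases hed : e = d
  · subst hed; left; intro x hx; exact hx
  · exact nonsep_iff.1 (ear_in_nonsep hT hd hmin) e (Finset.mem_erase.2 ⟨hed, he⟩)

/-- `InF d` is a tile of `T` -/
lemma ear_in_tile (hT : IsTiling n T) (hd : d ∈ T)
    (hmin : ∀ e ∈ T, d.1.2.val - d.1.1.val ≤ e.1.2.val - e.1.1.val) :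
    IsTile n T (InF n d) := by
  refine ⟨ear_in_nonsep' hT hd hmin, ?_⟩
  intro S'' hsub hns
  have hd2 := d.2.1
  rcases nonsep_iff.1 hns d hd with h | h
  · apply Finset.Subset.antisymm _ hsub
    intro x hx
    exact h x hx
  · exfalso
    have hx0 : (⟨d.1.1.val + 1, by have := d.1.2.isLt; omega⟩ : Fin n) ∈ InF n d := by
      rw [mem_InF]; simp; omega
    have := mem_OutF.1 (h _ (hsub hx0))
    simp at this
    omega

/-- a non-separated set having a point strictly inside `d` lies on the prescribed
side of every other diagonal -/
lemma ear_side (hT : IsTiling n T) (hd : d ∈ T)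
    (hmin : ∀ e ∈ T, d.1.2.val - d.1.1.val ≤ e.1.2.val - e.1.1.val)
    {S : Finset (Fin n)} (hS : NonSepSet n (T.erase d) S) {x : Fin n} (hx : x ∈ S)
    (hx1 : d.1.1.val < x.val) (hx2 : x.val < d.1.2.val) {e : Diag n}
    (he : e ∈ T.erase d) :
    ((e.1.2.val ≤ d.1.1.val ∨ d.1.2.val ≤ e.1.1.val) → ∀ y ∈ S, y ∈ OutF n e) ∧
    ((e.1.1.val ≤ d.1.1.val ∧ d.1.2.val ≤ e.1.2.val) → ∀ y ∈ S, y ∈ InF n e) := by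
  rcases nonsep_iff.1 hS e he with h | h
  · constructor
    · intro hcase y hy
      exfalso
      have := mem_InF.1 (h x hx)
      omega
    · intro _ y hy; exact h y hy
  · constructor
    · intro _ y hy; exact h y hy
    · intro hcase y hy
      have := mem_OutF.1 (h x hx)
      rw [mem_InF]
      omega

/-- union of two non-separated sets both meeting the open side of `d` -/
lemma ear_union (hT : IsTiling n T) (hd : d ∈ T)
    (hmin : ∀ e ∈ T, d.1.2.val - d.1.1.val ≤ e.1.2.val - e.1.1.val)
    {S1 S2 : Finset (Fin n)} (h1 : NonSepSet n (T.erase d) S1)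
    (h2 : NonSepSet n (T.erase d) S2) {x1 x2 : Fin n} (hx1 : x1 ∈ S1) (hx2 : x2 ∈ S2)
    (hx1a : d.1.1.val < x1.val) (hx1b : x1.val < d.1.2.val)
    (hx2a : d.1.1.val < x2.val) (hx2b : x2.val < d.1.2.val) :
    NonSepSet n (T.erase d) (S1 ∪ S2) := by
  rw [nonsep_iff]
  intro e he
  rcases ear_tri hT hd hmin he with h | h | h
  · right
    intro y hy
    rcases Finset.mem_union.1 hy with hy | hy
    · exact (ear_side hT hd hmin h1 hx1 hx1a hx1b he).1 (Or.inl h) y hy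
    · exact (ear_side hT hd hmin h2 hx2 hx2a hx2b he).1 (Or.inl h) y hy
  · right
    intro y hy
    rcases Finset.mem_union.1 hy with hy | hy
    · exact (ear_side hT hd hmin h1 hx1 hx1a hx1b he).1 (Or.inr h) y hy
    · exact (ear_side hT hd hmin h2 hx2 hx2a hx2b he).1 (Or.inr h) y hy
  · left
    intro y hy
    rcases Finset.mem_union.1 hy with hy | hy
    · exact (ear_side hT hd hmin h1 hx1 hx1a hx1b he).2 ⟨h.1, h.2.1⟩ y hy
    · exact (ear_side hT hd hmin h2 hx2 hx2a hx2b he).2 ⟨h.1, h.2.1⟩ y hy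

end Part2b
section Part2c

open Polygon

variable {n : ℕ} {T : Finset (Diag n)} {d : Diag n}

/-- there is a vertex outside `d` that can be adjoined to `InF d` -/
lemma ear_z (hT : IsTiling n T) (hd : d ∈ T)
    (hmin : ∀ e ∈ T, d.1.2.val - d.1.1.val ≤ e.1.2.val - e.1.1.val) :
    ∃ z : Fin n, ¬(d.1.1.val ≤ z.val ∧ z.val ≤ d.1.2.val) ∧
      NonSepSet n (T.erase d) (insert z (InF n d)) := by
  classical
  have hd2 := d.2.1
  have hde := d.2.2
  have hdb := d.1.2.isLt
  set a := d.1.1.val with ha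
  set b := d.1.2.val with hb
  set E : Finset (Diag n) :=
    (T.erase d).filter (fun e => e.1.1.val ≤ a ∧ b ≤ e.1.2.val) with hE
  -- membership helper for the insert set
  have hins : ∀ z : Fin n, ∀ y : Fin n, y ∈ insert z (InF n d) →
      y = z ∨ (a ≤ y.val ∧ y.val ≤ b) := by
    intro z y hy
    rcases Finset.mem_insert.1 hy with h | h
    · exact Or.inl h
    · exact Or.inr (mem_InF.1 h)
  rcases Finset.eq_empty_or_nonempty E with hEe | hEne
  · -- no enclosing diagonal
    have noenc : ∀ e ∈ T.erase d, ¬(e.1.1.val ≤ a ∧ b ≤ e.1.2.val) := by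
      intro e he hc
      have : e ∈ E := by rw [hE, Finset.mem_filter]; exact ⟨he, hc⟩
      rw [hEe] at this
      simp at this
    by_cases hA : 0 < a
    · refine ⟨⟨0, by omega⟩, by simp; omega, ?_⟩
      rw [nonsep_iff]
      intro e he
      have he2 := e.2.1
      right
      intro y hy
      rw [mem_OutF]
      rcases hins _ y hy with rfl | h
      · simp
      · rcases ear_tri hT hd hmin he with h' | h' | h'
        · omega
        · omega
        · exact absurd ⟨h'.1, h'.2.1⟩ (noenc e he)
    · -- a = 0, so b + 1 < n
      have hb1 : b + 1 < n := by omega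
      refine ⟨⟨n - 1, by omega⟩, by simp; omega, ?_⟩
      rw [nonsep_iff]
      intro e he
      have he2 := e.2.1
      have heb := e.1.2.isLt
      right
      intro y hy
      rw [mem_OutF]
      rcases hins _ y hy with rfl | h
      · simp; omega
      · rcases ear_tri hT hd hmin he with h' | h' | h'
        · omega
        · omega
        · exact absurd ⟨h'.1, h'.2.1⟩ (noenc e he)
  · -- minimal enclosing diagonal e*
    obtain ⟨es, hes, hesmin⟩ := E.exists_min_image
      (fun e => e.1.2.val - e.1.1.val) hEne
    rw [hE, Finset.mem_filter] at hes
    obtain ⟨hesT', ⟨hesa, hesb⟩⟩ := hes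
    have hesT : es ∈ T := Finset.mem_of_mem_erase hesT'
    have hes2 := es.2.1
    have hesbn := es.1.2.isLt
    have hesne : ¬(es.1.1.val = a ∧ es.1.2.val = b) :=
      fun ⟨u, v⟩ => (Finset.ne_of_mem_erase hesT') (diag_ext u v)
    set p := es.1.1.val with hp
    set q := es.1.2.val with hq
    -- nestedness of enclosing diagonals
    have nested : ∀ e ∈ E, e.1.1.val ≤ p ∧ q ≤ e.1.2.val := by
      intro e he
      have hemin := hesmin e he
      rw [hE, Finset.mem_filter] at he
      obtain ⟨heT', ⟨hea, heb⟩⟩ := he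
      have heT : e ∈ T := Finset.mem_of_mem_erase heT'
      have he2 := e.2.1
      by_cases hee : e = es
      · subst hee; omega
      · have hvne : ¬(e.1.1.val = p ∧ e.1.2.val = q) :=
          fun ⟨u, v⟩ => hee (diag_ext u v)
        have c1 : ¬ Cross e es := hT e heT es hesT
        have c2 : ¬ Cross es e := hT es hesT e heT
        simp only [Cross, not_or] at c1 c2
        omega
    by_cases hpa : p < a
    · -- z = p
      refine ⟨⟨p, by omega⟩, by simp; omega, ?_⟩
      rw [nonsep_iff]
      intro e he
      have he2 := e.2.1
      have heT : e ∈ T := Finset.mem_of_mem_erase he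
      rcases ear_tri hT hd hmin he with h' | h' | h'
      · right
        intro y hy
        rw [mem_OutF]
        rcases hins _ y hy with rfl | h
        · -- y = p : use non-crossing with es
          have c1 : ¬ Cross e es := hT e heT es hesT
          have c2 : ¬ Cross es e := hT es hesT e heT
          simp only [Cross, not_or] at c1 c2
          simp
          omega
        · omega
      · right
        intro y hy
        rw [mem_OutF]
        rcases hins _ y hy with rfl | h
        · simp; omega
        · omega
      · left
        have heE : e ∈ E := by
          rw [hE, Finset.mem_filter]
          exact ⟨he, h'.1, h'.2.1⟩
        have hnest := nested e heE
        intro y hy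
        rw [mem_InF]
        rcases hins _ y hy with rfl | h
        · simp; omega
        · omega
    · -- p = a, hence b < q ; z = q
      have hpa' : p = a := by omega
      have hbq : b < q := by omega
      refine ⟨⟨q, by omega⟩, by simp; omega, ?_⟩
      rw [nonsep_iff]
      intro e he
      have he2 := e.2.1
      have heT : e ∈ T := Finset.mem_of_mem_erase he
      rcases ear_tri hT hd hmin he with h' | h' | h'
      · right
        intro y hy
        rw [mem_OutF]
        rcases hins _ y hy with rfl | h
        · simp; omega
        · omega
      · right
        intro y hy
        rw [mem_OutF]
        rcases hins _ y hy with rfl | h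
        · have c1 : ¬ Cross e es := hT e heT es hesT
          have c2 : ¬ Cross es e := hT es hesT e heT
          simp only [Cross, not_or] at c1 c2
          simp
          omega
        · omega
      · left
        have heE : e ∈ E := by
          rw [hE, Finset.mem_filter]
          exact ⟨he, h'.1, h'.2.1⟩
        have hnest := nested e heE
        intro y hy
        rw [mem_InF]
        rcases hins _ y hy with rfl | h
        · simp; omega
        · omega

end Part2c
section Part2d

open Polygon

variable {n : ℕ} {T : Finset (Diag n)} {d : Diag n}

lemma nonsep_mono {T' : Finset (Diag n)} {S : Finset (Fin n)} (h : T' ⊆ T)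
    (hS : NonSepSet n T S) : NonSepSet n T' S :=
  fun x hx y hy e he => hS x hx y hy e (h he)

lemma ear_split (hT : IsTiling n T) (hd : d ∈ T)
    (hmin : ∀ e ∈ T, d.1.2.val - d.1.1.val ≤ e.1.2.val - e.1.1.val) :
    ∃ M, IsTile n (T.erase d) M ∧ InF n d ⊆ M ∧
      tiles n T =
        insert (InF n d) ((tiles n (T.erase d)).image (fun S => S ∩ OutF n d)) ∧
      (∃ z ∈ M, ¬(d.1.1.val ≤ z.val ∧ z.val ≤ d.1.2.val)) ∧
      (∀ S' ∈ tiles n (T.erase d), S' ≠ M → S' ∩ OutF n d = S') ∧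
      Set.InjOn (fun S => S ∩ OutF n d) ↑(tiles n (T.erase d)) ∧
      InF n d ∉ (tiles n (T.erase d)).image (fun S => S ∩ OutF n d) := by
  classical
  have hd2 := d.2.1
  have hdb := d.1.2.isLt
  set a := d.1.1.val with ha
  set b := d.1.2.val with hb
  set T' := T.erase d with hT'def
  have hT'T : T' ⊆ T := Finset.erase_subset _ _
  have hT' : IsTiling n T' := isTiling_subset hT'T hT
  set x0 : Fin n := ⟨a + 1, by omega⟩ with hx0
  have hx0In : x0 ∈ InF n d := by rw [mem_InF]; simp [hx0]; omega
  obtain ⟨M, hMtile, hMsub⟩ := exists_tile T' (InF n d) (ear_in_nonsep hT hd hmin)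
  have hx0M : x0 ∈ M := hMsub hx0In
  have hx0a : a < x0.val := by simp [hx0]
  have hx0b : x0.val < b := by simp [hx0]; omega
  -- uniqueness of the interior tile
  have uniq : ∀ S', IsTile n T' S' → ∀ x ∈ S', a < x.val → x.val < b → S' = M := by
    intro S' hS' x hx hxa hxb
    have hu := ear_union hT hd hmin hS'.1 hMtile.1 hx hx0M hxa hxb hx0a hx0b
    have h1 : S' ∪ M = S' := hS'.2 _ Finset.subset_union_left hu
    have h2 : S' ∪ M = M := hMtile.2 _ Finset.subset_union_right hu
    rw [← h1, h2]
  -- the extra vertex z of M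
  obtain ⟨z, hznotin, hzns⟩ := ear_z hT hd hmin
  obtain ⟨M2, hM2tile, hM2sub⟩ := exists_tile T' _ hzns
  have hM2M : M2 = M :=
    uniq M2 hM2tile x0 (hM2sub (Finset.mem_insert_of_mem hx0In)) hx0a hx0b
  have hzM : z ∈ M := hM2M ▸ hM2sub (Finset.mem_insert_self _ _)
  -- the endpoints of d
  have haM : d.1.1 ∈ M := hMsub (by rw [mem_InF]; omega)
  have hbM : d.1.2 ∈ M := hMsub (by rw [mem_InF]; omega)
  have haOut : d.1.1 ∈ OutF n d := by rw [mem_OutF]; omega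
  have hbOut : d.1.2 ∈ OutF n d := by rw [mem_OutF]; omega
  have hzOut : z ∈ OutF n d := by rw [mem_OutF]; omega
  -- P9 : tiles of T' other than M avoid the inside of d
  have P9 : ∀ S' , IsTile n T' S' → S' ≠ M → S' ⊆ OutF n d := by
    intro S' hS' hne x hx
    rw [mem_OutF]
    by_contra hc
    exact hne (uniq S' hS' x hx (by omega) (by omega))
  have P9' : ∀ S', IsTile n T' S' → S' ≠ M → S' ∩ OutF n d = S' := by
    intro S' hS' hne
    exact Finset.inter_eq_left.2 (P9 S' hS' hne)
  -- tiles of T' other than M are tiles of T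
  have P9b : ∀ S', IsTile n T' S' → S' ≠ M → IsTile n T S' := by
    intro S' hS' hne
    constructor
    · rw [nonsep_iff]
      intro e he
      by_cases hed : e = d
      · subst hed
        right
        intro x hx
        exact P9 S' hS' hne hx
      · exact nonsep_iff.1 hS'.1 e (Finset.mem_erase.2 ⟨hed, he⟩)
    · intro S'' hsub hns
      exact hS'.2 S'' hsub (nonsep_mono hT'T hns)
  -- M ∩ OutF d is a tile of T
  have P10 : IsTile n T (M ∩ OutF n d) := by
    constructor
    · rw [nonsep_iff]
      intro e he
      by_cases hed : e = d
      · subst hed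
        right
        intro x hx
        exact (Finset.mem_inter.1 hx).2
      · rcases nonsep_iff.1 hMtile.1 e (Finset.mem_erase.2 ⟨hed, he⟩) with h | h
        · left; intro x hx; exact h x (Finset.mem_inter.1 hx).1
        · right; intro x hx; exact h x (Finset.mem_inter.1 hx).1
    · intro S'' hsub hns
      have haS : d.1.1 ∈ S'' := hsub (Finset.mem_inter.2 ⟨haM, haOut⟩)
      have hbS : d.1.2 ∈ S'' := hsub (Finset.mem_inter.2 ⟨hbM, hbOut⟩)
      have hzS : z ∈ S'' := hsub (Finset.mem_inter.2 ⟨hzM, hzOut⟩)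
      rcases nonsep_iff.1 hns d hd with h | h
      · exfalso
        have := mem_InF.1 (h z hzS)
        omega
      · -- S'' ⊆ OutF d ; show S'' ∪ M is non-separated by T'
        have hu : NonSepSet n T' (S'' ∪ M) := by
          rw [nonsep_iff]
          intro e he
          have heT : e ∈ T := hT'T he
          have he2 := e.2.1
          rcases ear_tri hT hd hmin he with h' | h' | h'
          · right
            intro y hy
            rcases Finset.mem_union.1 hy with hy | hy
            · rcases nonsep_iff.1 hns e heT with h'' | h''
              · exfalso
                have := mem_InF.1 (h'' d.1.2 hbS)
                omega
              · exact h'' y hy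
            · exact (ear_side hT hd hmin hMtile.1 hx0M hx0a hx0b he).1 (Or.inl h') y hy
          · right
            intro y hy
            rcases Finset.mem_union.1 hy with hy | hy
            · rcases nonsep_iff.1 hns e heT with h'' | h''
              · exfalso
                have := mem_InF.1 (h'' d.1.1 haS)
                omega
              · exact h'' y hy
            · exact (ear_side hT hd hmin hMtile.1 hx0M hx0a hx0b he).1 (Or.inr h') y hy
          · left
            intro y hy
            rcases Finset.mem_union.1 hy with hy | hy
            · rcases nonsep_iff.1 hns e heT with h'' | h''
              · exact h'' y hy
              · exfalso
                have u1 := mem_OutF.1 (h'' d.1.1 haS)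
                have u2 := mem_OutF.1 (h'' d.1.2 hbS)
                have := h'.2.2
                omega
            · exact (ear_side hT hd hmin hMtile.1 hx0M hx0a hx0b he).2 ⟨h'.1, h'.2.1⟩ y hy
        have hSM : S'' ∪ M = M := hMtile.2 _ Finset.subset_union_right hu
        have hS''M : S'' ⊆ M := by
          rw [← hSM]; exact Finset.subset_union_left
        apply Finset.Subset.antisymm _ hsub
        intro x hx
        exact Finset.mem_inter.2 ⟨hS''M hx, h x hx⟩
  -- the set equality
  have hAeq : tiles n T =
      insert (InF n d) ((tiles n T').image (fun S => S ∩ OutF n d)) := by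
    ext S
    rw [mem_tiles]
    constructor
    · intro hS
      rcases nonsep_iff.1 hS.1 d hd with h | h
      · have : InF n d = S := hS.2 (InF n d) h (ear_in_nonsep' hT hd hmin)
        rw [← this]
        exact Finset.mem_insert_self _ _
      · apply Finset.mem_insert_of_mem
        rw [Finset.mem_image]
        obtain ⟨S1, hS1tile, hS1sub⟩ := exists_tile T' S (nonsep_mono hT'T hS.1)
        by_cases hSM : S1 = M
        · refine ⟨M, mem_tiles.2 hMtile, ?_⟩
          apply hS.2 _ _ P10.1
          intro x hx
          exact Finset.mem_inter.2 ⟨hSM ▸ hS1sub hx, h x hx⟩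
        · refine ⟨S1, mem_tiles.2 hS1tile, ?_⟩
          rw [P9' S1 hS1tile hSM]
          exact hS.2 S1 hS1sub (P9b S1 hS1tile hSM).1
    · intro hS
      rcases Finset.mem_insert.1 hS with rfl | hS
      · exact ear_in_tile hT hd hmin
      · rw [Finset.mem_image] at hS
        obtain ⟨S1, hS1, rfl⟩ := hS
        rw [mem_tiles] at hS1
        by_cases hSM : S1 = M
        · subst hSM; exact P10
        · rw [P9' S1 hS1 hSM]
          exact P9b S1 hS1 hSM
  -- injectivity
  have hinj : Set.InjOn (fun S => S ∩ OutF n d) ↑(tiles n T') := by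
    intro S1 h1 S2 h2 heq
    rw [Finset.mem_coe, mem_tiles] at h1 h2
    simp only at heq
    by_cases e1 : S1 = M <;> by_cases e2 : S2 = M
    · rw [e1, e2]
    · exfalso
      rw [e1, P9' S2 h2 e2] at heq
      have : S2 ⊆ M := heq ▸ Finset.inter_subset_left
      exact e2 ((h2.2 M this hMtile.1).symm)
    · exfalso
      rw [e2, P9' S1 h1 e1] at heq
      have : S1 ⊆ M := heq ▸ Finset.inter_subset_left
      exact e1 ((h1.2 M this hMtile.1).symm)
    · rw [P9' S1 h1 e1, P9' S2 h2 e2] at heq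
      exact heq
  -- InF d is not in the image
  have hnm : InF n d ∉ (tiles n T').image (fun S => S ∩ OutF n d) := by
    rw [Finset.mem_image]
    rintro ⟨S1, hS1, heq⟩
    have : x0 ∈ S1 ∩ OutF n d := heq.symm ▸ hx0In
    have := mem_OutF.1 (Finset.mem_inter.1 this).2
    simp [hx0] at this
    omega
  exact ⟨M, hMtile, hMsub, hAeq, ⟨z, hzM, hznotin⟩, fun S' hS' => P9' S' (mem_tiles.1 hS'),
    hinj, hnm⟩

end Part2d
section Part2e

open Polygon

variable {n : ℕ}

lemma tiles_facts (hn : 3 ≤ n) (T : Finset (Diag n)) : IsTiling n T →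
    (tiles n T).card = T.card + 1 ∧ (∀ S ∈ tiles n T, 3 ≤ S.card) ∧
    (∑ S ∈ tiles n T, S.card) = n + 2 * T.card := by
  classical
  induction T using Finset.strongInductionOn with
  | _ T IH =>
  intro hT
  rcases T.eq_empty_or_nonempty with rfl | hne
  · rw [tiles_empty hn]
    simp
    omega
  · obtain ⟨d, hd, hdmin⟩ := T.exists_min_image (fun e => e.1.2.val - e.1.1.val) hne
    have hd2 := d.2.1
    have hdb := d.1.2.isLt
    have hT'T : T.erase d ⊆ T := Finset.erase_subset _ _
    have hTe : IsTiling n (T.erase d) := isTiling_subset hT'T hT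
    have hss : (T.erase d) ⊂ T := Finset.erase_ssubset hd
    obtain ⟨hcard', h3', hsum'⟩ := IH (T.erase d) hss hTe
    have hcT : (T.erase d).card + 1 = T.card := Finset.card_erase_add_one hd
    obtain ⟨M, hMtile, hMsub, hAeq, ⟨z, hzM, hznotin⟩, hP9', hinj, hnm⟩ :=
      ear_split hT hd hdmin
    have hMmem : M ∈ tiles n (T.erase d) := mem_tiles.2 hMtile
    have haM : d.1.1 ∈ M := hMsub (by rw [mem_InF]; omega)
    have hbM : d.1.2 ∈ M := hMsub (by rw [mem_InF]; omega)
    have hanb : d.1.1 ≠ d.1.2 := by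
      intro h
      have := congrArg Fin.val h
      omega
    -- intersection of InF and OutF is the endpoint pair
    have hInOut : InF n d ∩ OutF n d = ({d.1.1, d.1.2} : Finset (Fin n)) := by
      ext x
      rw [Finset.mem_inter, mem_InF, mem_OutF, Finset.mem_insert, Finset.mem_singleton]
      constructor
      · intro ⟨h1, h2⟩
        have : x.val = d.1.1.val ∨ x.val = d.1.2.val := by omega
        rcases this with h | h
        · exact Or.inl (Fin.ext h)
        · exact Or.inr (Fin.ext h)
      · rintro (rfl | rfl) <;> omega
    have hpair : ({d.1.1, d.1.2} : Finset (Fin n)).card = 2 := by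
      rw [Finset.card_insert_of_notMem (by simp [hanb]), Finset.card_singleton]
    -- card identity for the split of M
    have hMIn : M ∩ InF n d = InF n d := Finset.inter_eq_right.2 hMsub
    have hMunion : (M ∩ InF n d) ∪ (M ∩ OutF n d) = M := by
      ext x
      simp only [Finset.mem_union, Finset.mem_inter, mem_InF, mem_OutF]
      constructor
      · rintro (⟨h, _⟩ | ⟨h, _⟩) <;> exact h
      · intro hx
        by_cases hc : d.1.1.val ≤ x.val ∧ x.val ≤ d.1.2.val
        · exact Or.inl ⟨hx, hc⟩
        · exact Or.inr ⟨hx, by omega⟩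
    have hMinter : (M ∩ InF n d) ∩ (M ∩ OutF n d) = ({d.1.1, d.1.2} : Finset (Fin n)) := by
      rw [Finset.inter_inter_inter_comm, Finset.inter_self, hInOut]
      apply Finset.inter_eq_right.2
      intro x hx
      rcases Finset.mem_insert.1 hx with rfl | hx
      · exact haM
      · rw [Finset.mem_singleton] at hx
        subst hx
        exact hbM
    have hkey : (InF n d).card + (M ∩ OutF n d).card = M.card + 2 := by
      have := Finset.card_inter_add_card_union (M ∩ InF n d) (M ∩ OutF n d)
      rw [hMinter, hMunion, hpair, hMIn] at this
      omega
    -- cardinality bounds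
    have hIn3 : 3 ≤ (InF n d).card := by
      refine three_le_card (u := d.1.1) (v := ⟨d.1.1.val + 1, by omega⟩) (w := d.1.2)
        ?_ ?_ ?_ ?_ ?_ ?_
      · rw [mem_InF]; omega
      · rw [mem_InF]; simp; omega
      · rw [mem_InF]; omega
      · intro h; have := congrArg Fin.val h; simp at this
      · exact hanb
      · intro h; have := congrArg Fin.val h; simp at this; omega
    have hMOut3 : 3 ≤ (M ∩ OutF n d).card := by
      refine three_le_card (u := d.1.1) (v := d.1.2) (w := z) ?_ ?_ ?_ hanb ?_ ?_
      · exact Finset.mem_inter.2 ⟨haM, by rw [mem_OutF]; omega⟩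
      · exact Finset.mem_inter.2 ⟨hbM, by rw [mem_OutF]; omega⟩
      · exact Finset.mem_inter.2 ⟨hzM, by rw [mem_OutF]; omega⟩
      · intro h; have := congrArg Fin.val h; omega
      · intro h; have := congrArg Fin.val h; omega
    have hinj' : ∀ x ∈ tiles n (T.erase d), ∀ y ∈ tiles n (T.erase d),
        x ∩ OutF n d = y ∩ OutF n d → x = y := by
      intro x hx y hy hxy
      exact hinj (Finset.mem_coe.2 hx) (Finset.mem_coe.2 hy) hxy
    refine ⟨?_, ?_, ?_⟩
    · rw [hAeq, Finset.card_insert_of_notMem hnm, Finset.card_image_of_injOn hinj]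
      omega
    · intro S hS
      rw [hAeq] at hS
      rcases Finset.mem_insert.1 hS with rfl | hS
      · exact hIn3
      · rw [Finset.mem_image] at hS
        obtain ⟨S1, hS1, rfl⟩ := hS
        by_cases hSM : S1 = M
        · subst hSM; exact hMOut3
        · rw [hP9' S1 hS1 hSM]
          exact h3' S1 hS1
    · rw [hAeq, Finset.sum_insert hnm, Finset.sum_image hinj']
      have e1 : ∑ S1 ∈ tiles n (T.erase d), (S1 ∩ OutF n d).card
          = (M ∩ OutF n d).card + ∑ S1 ∈ (tiles n (T.erase d)).erase M, (S1 ∩ OutF n d).card :=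
        (Finset.add_sum_erase _ _ hMmem).symm
      have e2 : ∑ S1 ∈ (tiles n (T.erase d)).erase M, (S1 ∩ OutF n d).card
          = ∑ S1 ∈ (tiles n (T.erase d)).erase M, S1.card := by
        apply Finset.sum_congr rfl
        intro S1 hS1
        rw [hP9' S1 (Finset.mem_of_mem_erase hS1) (Finset.ne_of_mem_erase hS1)]
      have e3 : ∑ S1 ∈ tiles n (T.erase d), S1.card
          = M.card + ∑ S1 ∈ (tiles n (T.erase d)).erase M, S1.card :=
        (Finset.add_sum_erase _ _ hMmem).symm
      rw [e1, e2]
      omega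

end Part2e
section Part3a

open Polygon

/-- the distinguished diagonal `{1, n-1}` -/
def dstar (n : ℕ) (hn : 4 ≤ n) : Diag n :=
  ⟨(⟨1, by omega⟩, ⟨n - 1, by omega⟩), by constructor <;> simp <;> omega⟩

lemma dstar_fst (n : ℕ) (hn : 4 ≤ n) : (dstar n hn).1.1.val = 1 := rfl
lemma dstar_snd (n : ℕ) (hn : 4 ≤ n) : (dstar n hn).1.2.val = n - 1 := rfl

/-- toggling predicate: `(0,b)` is a diagonal that can be toggled in `T` -/
def KP (n : ℕ) (T : Finset (Polygon.Diag n)) (b : ℕ) : Prop :=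
  2 ≤ b ∧ b + 2 ≤ n ∧ ∃ e : Diag n, e.1.1.val = 0 ∧ e.1.2.val = b ∧
    (e ∈ T ∨ ∀ f ∈ T, ¬ Cross e f ∧ ¬ Cross f e)

/-- if no vertex-0 diagonal can be toggled, then `{1,n-1} ∈ T` -/
lemma exists_KP {n : ℕ} (hn : 4 ≤ n) {T : Finset (Diag n)} (hT : IsTiling n T)
    (hds : dstar n hn ∉ T) : ∃ b, KP n T b := by
  by_contra hc
  push_neg at hc
  -- blocking diagonals
  have hblock : ∀ b : ℕ, 2 ≤ b → b + 2 ≤ n →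
      ∃ f ∈ T, 0 < f.1.1.val ∧ f.1.1.val < b ∧ b < f.1.2.val := by
    intro b h2 hb2
    set eb : Diag n := ⟨(⟨0, by omega⟩, ⟨b, by omega⟩), by constructor <;> simp <;> omega⟩
      with heb
    have hKP := hc b
    rw [KP] at hKP
    push_neg at hKP
    have := hKP h2 hb2 eb rfl rfl
    obtain ⟨hebT, f, hfT, hcross⟩ := this
    refine ⟨f, hfT, ?_⟩
    have hf2 := f.2.1
    have heb1 : eb.1.1.val = 0 := rfl
    have heb2 : eb.1.2.val = b := rfl
    have hor : Cross eb f ∨ Cross f eb := by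
      by_cases hcf : Cross eb f
      · exact Or.inl hcf
      · exact Or.inr (hcross hcf)
    rcases hor with (⟨u1, u2, u3⟩ | ⟨u1, u2, u3⟩) | (⟨u1, u2, u3⟩ | ⟨u1, u2, u3⟩) <;> omega
  -- maximal diagonal from vertex 1
  have hF : (T.filter (fun f => f.1.1.val = 1)).Nonempty := by
    obtain ⟨f, hfT, h1, h2, h3⟩ := hblock 2 (by omega) (by omega)
    exact ⟨f, Finset.mem_filter.2 ⟨hfT, by omega⟩⟩
  obtain ⟨g, hg, hgmax⟩ := (T.filter (fun f => f.1.1.val = 1)).exists_max_image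
    (fun f => f.1.2.val) hF
  rw [Finset.mem_filter] at hg
  obtain ⟨hgT, hg1⟩ := hg
  have hg2 := g.2.1
  have hgb := g.1.2.isLt
  by_cases hgn : g.1.2.val = n - 1
  · exact hds (by rw [show dstar n hn = g from (diag_ext (by rw [hg1]; rfl)
      (by rw [hgn]; rfl)).symm]; exact hgT)
  · obtain ⟨f, hfT, h1, h2, h3⟩ := hblock g.1.2.val (by omega) (by omega)
    have hcross1 : ¬ Cross g f := hT g hgT f hfT
    have hp1 : f.1.1.val = 1 := by
      simp only [Cross, not_or] at hcross1
      omega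
    have := hgmax f (Finset.mem_filter.2 ⟨hfT, hp1⟩)
    omega

/-- the toggling involution -/
noncomputable def tog (n : ℕ) (T : Finset (Diag n)) : Finset (Diag n) :=
  if h : ∃ b, KP n T b then
    if (Nat.find_spec h).2.2.choose ∈ T then T.erase ((Nat.find_spec h).2.2.choose)
    else insert ((Nat.find_spec h).2.2.choose) T
  else T

lemma KP_of_tog {n : ℕ} {T : Finset (Diag n)} {b : ℕ}
    (e₀ : Diag n) (he₀ : e₀.1.1.val = 0) (hbne : e₀.1.2.val ≠ b)
    (hK : KP n (if e₀ ∈ T then T.erase e₀ else insert e₀ T) b) : KP n T b := by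
  obtain ⟨h2, hb2, e, he1, he2, hcond⟩ := hK
  refine ⟨h2, hb2, e, he1, he2, ?_⟩
  by_cases hmem : e₀ ∈ T
  · rw [if_pos hmem] at hcond
    rcases hcond with hc | hc
    · exact Or.inl (Finset.mem_of_mem_erase hc)
    · by_cases hee : e ∈ T
      · exact Or.inl hee
      · right
        intro f hfT
        by_cases hfe : f = e₀
        · subst hfe
          refine ⟨fun hcr => ?_, fun hcr => ?_⟩ <;>
            · rcases hcr with ⟨u1, u2, u3⟩ | ⟨u1, u2, u3⟩ <;> omega
        · exact hc f (Finset.mem_erase.2 ⟨hfe, hfT⟩)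
  · rw [if_neg hmem] at hcond
    rcases hcond with hc | hc
    · rcases Finset.mem_insert.1 hc with rfl | hc
      · exact absurd he2 hbne
      · exact Or.inl hc
    · right
      intro f hfT
      exact hc f (Finset.mem_insert_of_mem hfT)

end Part3a
section Part3b

open Polygon

lemma tog_master {n : ℕ} (hn : 4 ≤ n) {T : Finset (Diag n)} (hT : IsTiling n T)
    (hds : dstar n hn ∉ T) :
    IsTiling n (tog n T) ∧ dstar n hn ∉ tog n T ∧ tog n (tog n T) = T ∧
      ((tog n T).card + 1 = T.card ∨ T.card + 1 = (tog n T).card) := by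
  classical
  have hex : ∃ b, KP n T b := exists_KP hn hT hds
  set b₀ := Nat.find hex with hb₀
  obtain ⟨he₀1, he₀2, he₀cond⟩ := (Nat.find_spec hex).2.2.choose_spec
  set e₀ : Diag n := (Nat.find_spec hex).2.2.choose with he₀def
  have h2b : 2 ≤ b₀ := (Nat.find_spec hex).1
  have hb2n : b₀ + 2 ≤ n := (Nat.find_spec hex).2.1
  have htog : tog n T = if e₀ ∈ T then T.erase e₀ else insert e₀ T := by
    rw [tog, dif_pos hex]
  have hds' : (dstar n hn) ≠ e₀ := by
    intro h
    have := congrArg (fun e : Diag n => e.1.1.val) h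
    simp only [dstar_fst] at this
    omega
  -- the toggled set is a tiling
  have htile : IsTiling n (tog n T) := by
    rw [htog]
    by_cases hmem : e₀ ∈ T
    · rw [if_pos hmem]
      exact isTiling_subset (Finset.erase_subset _ _) hT
    · rw [if_neg hmem]
      have hnc : ∀ f ∈ T, ¬ Cross e₀ f ∧ ¬ Cross f e₀ := by
        rcases he₀cond with hc | hc
        · exact absurd hc hmem
        · exact hc
      intro d hd e he
      rcases Finset.mem_insert.1 hd with rfl | hd <;>
        rcases Finset.mem_insert.1 he with rfl | he
      · intro hcr
        rcases hcr with ⟨u1, u2, u3⟩ | ⟨u1, u2, u3⟩ <;> omega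
      · exact (hnc e he).1
      · exact (hnc d hd).2
      · exact hT d hd e he
  -- dstar is still absent
  have hds2 : dstar n hn ∉ tog n T := by
    rw [htog]
    by_cases hmem : e₀ ∈ T
    · rw [if_pos hmem]
      exact fun hc => hds (Finset.mem_of_mem_erase hc)
    · rw [if_neg hmem]
      intro hc
      rcases Finset.mem_insert.1 hc with h | h
      · exact hds' h
      · exact hds h
  -- KP for the toggled set at b₀
  have hKtog : KP n (tog n T) b₀ := by
    refine ⟨h2b, hb2n, e₀, he₀1, he₀2, ?_⟩
    rw [htog]
    by_cases hmem : e₀ ∈ T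
    · rw [if_pos hmem]
      right
      intro f hf
      exact ⟨hT e₀ hmem f (Finset.mem_of_mem_erase hf),
        hT f (Finset.mem_of_mem_erase hf) e₀ hmem⟩
    · rw [if_neg hmem]
      exact Or.inl (Finset.mem_insert_self _ _)
  have hex' : ∃ b, KP n (tog n T) b := ⟨b₀, hKtog⟩
  -- the minimal toggle index is unchanged
  have hmin' : ∀ b, b < b₀ → ¬ KP n (tog n T) b := by
    intro b hb hK
    have : KP n T b := KP_of_tog e₀ he₀1 (by omega) (by rw [← htog]; exact hK)
    exact Nat.find_min hex hb this
  have hfind : Nat.find hex' = b₀ :=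
    le_antisymm (Nat.find_le hKtog)
      (not_lt.1 (fun hlt => hmin' _ hlt (Nat.find_spec hex')))
  obtain ⟨he₁1, he₁2, he₁cond⟩ := (Nat.find_spec hex').2.2.choose_spec
  set e₁ : Diag n := (Nat.find_spec hex').2.2.choose with he₁def
  have he₁e₀ : e₁ = e₀ := diag_ext (by rw [he₁1, he₀1]) (by rw [he₁2, he₀2, hfind])
  have hinv : tog n (tog n T) = T := by
    rw [tog, dif_pos hex', ← he₁def, he₁e₀, htog]
    by_cases hmem : e₀ ∈ T
    · rw [if_pos hmem]
      rw [if_neg (Finset.notMem_erase _ _), Finset.insert_erase hmem]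
    · rw [if_neg hmem]
      rw [if_pos (Finset.mem_insert_self _ _), Finset.erase_insert hmem]
  refine ⟨htile, hds2, hinv, ?_⟩
  rw [htog]
  by_cases hmem : e₀ ∈ T
  · rw [if_pos hmem]
    exact Or.inl (Finset.card_erase_add_one hmem)
  · rw [if_neg hmem]
    exact Or.inr (Finset.card_insert_of_notMem hmem).symm

/-- the alternating sum over tilings not containing `dstar` vanishes -/
lemma toggle_sum_zero {n : ℕ} (hn : 4 ≤ n) :
    ∑ T ∈ (Finset.univ.filter (fun T : Finset (Diag n) => IsTiling n T)).filter
      (fun T => dstar n hn ∉ T), (-1 : ℤ) ^ T.card = 0 := by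
  classical
  apply Finset.sum_involution (fun T _ => tog n T)
  · intro T hT
    simp only [Finset.mem_filter, Finset.mem_univ, true_and] at hT
    obtain ⟨h1, h2, h3, h4⟩ := tog_master hn hT.1 hT.2
    rcases h4 with h | h
    · rw [← h, pow_succ]
      ring
    · rw [← h, pow_succ]
      ring
  · intro T hT _
    simp only [Finset.mem_filter, Finset.mem_univ, true_and] at hT
    obtain ⟨h1, h2, h3, h4⟩ := tog_master hn hT.1 hT.2
    intro he
    rw [he] at h4
    omega
  · intro T hT
    simp only [Finset.mem_filter, Finset.mem_univ, true_and] at hT ⊢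
    obtain ⟨h1, h2, h3, h4⟩ := tog_master hn hT.1 hT.2
    exact ⟨h1, h2⟩
  · intro T hT
    simp only [Finset.mem_filter, Finset.mem_univ, true_and] at hT
    exact (tog_master hn hT.1 hT.2).2.2.1

end Part3b
section Part3c

open Polygon

lemma diag3_empty : IsEmpty (Diag 3) := by
  constructor
  intro d
  have h1 := d.2.1
  have h2 := d.2.2
  have h3 := d.1.2.isLt
  omega

/-- the shift embedding of diagonals -/
def dmap (n : ℕ) (e : Diag n) : Diag (n + 1) :=
  ⟨(⟨e.1.1.val + 1, by have := e.1.1.isLt; omega⟩,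
    ⟨e.1.2.val + 1, by have := e.1.2.isLt; omega⟩), by
    constructor
    · simp
      exact e.2.1
    · simp⟩

lemma dmap_fst {n : ℕ} (e : Diag n) : (dmap n e).1.1.val = e.1.1.val + 1 := rfl
lemma dmap_snd {n : ℕ} (e : Diag n) : (dmap n e).1.2.val = e.1.2.val + 1 := rfl

lemma dmap_inj {n : ℕ} {e f : Diag n} (h : dmap n e = dmap n f) : e = f := by
  have h1 := congrArg (fun x : Diag (n+1) => x.1.1.val) h
  have h2 := congrArg (fun x : Diag (n+1) => x.1.2.val) h
  simp only [dmap_fst, dmap_snd] at h1 h2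
  exact diag_ext (by omega) (by omega)

lemma cross_dmap {n : ℕ} {e f : Diag n} : Cross (dmap n e) (dmap n f) ↔ Cross e f := by
  constructor <;>
    · intro h
      rcases h with ⟨u1, u2, u3⟩ | ⟨u1, u2, u3⟩
      · left
        simp only [dmap_fst, dmap_snd] at *
        omega
      · right
        simp only [dmap_fst, dmap_snd] at *
        omega

lemma dmap_ne_dstar {n : ℕ} (hn : 4 ≤ n + 1) (e : Diag n) : dmap n e ≠ dstar (n+1) hn := by
  intro h
  have h1 := congrArg (fun x : Diag (n+1) => x.1.1.val) h
  have h2 := congrArg (fun x : Diag (n+1) => x.1.2.val) h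
  simp only [dmap_fst, dmap_snd, dstar_fst, dstar_snd] at h1 h2
  have := e.2.2
  have := e.1.2.isLt
  omega

lemma nocross_dstar_dmap {n : ℕ} (hn : 4 ≤ n + 1) (e : Diag n) :
    ¬ Cross (dstar (n+1) hn) (dmap n e) ∧ ¬ Cross (dmap n e) (dstar (n+1) hn) := by
  have h1 := e.1.2.isLt
  have h2 := e.2.1
  constructor <;>
    · intro h
      rcases h with ⟨u1, u2, u3⟩ | ⟨u1, u2, u3⟩ <;>
        · simp only [dmap_fst, dmap_snd, dstar_fst, dstar_snd] at u1 u2 u3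
          omega

/-- diagonals of a tiling containing `dstar` are in the range of `dmap`, except `dstar` -/
lemma mem_range_dmap {n : ℕ} (hn : 4 ≤ n + 1) {T : Finset (Diag (n+1))}
    (hT : IsTiling (n+1) T) (hds : dstar (n+1) hn ∈ T) {e : Diag (n+1)} (he : e ∈ T)
    (hne : e ≠ dstar (n+1) hn) : ∃ e' : Diag n, dmap n e' = e := by
  have hc1 : ¬ Cross e (dstar (n+1) hn) := hT e he _ hds
  have hc2 : ¬ Cross (dstar (n+1) hn) e := hT _ hds e he
  have he2 := e.2.1
  have he3 := e.2.2
  have heb := e.1.2.isLt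
  have ha1 : 1 ≤ e.1.1.val := by
    by_contra hc
    push_neg at hc
    apply hc1
    left
    simp only [dstar_fst, dstar_snd]
    have hvne : ¬(e.1.1.val = 1 ∧ e.1.2.val = n) :=
      fun ⟨u, v⟩ => hne (diag_ext (by rw [u]; rfl) (by rw [v]; show n = n + 1 - 1; omega))
    omega
  have hvne : ¬(e.1.1.val = 1 ∧ e.1.2.val = n) :=
    fun ⟨u, v⟩ => hne (diag_ext (by rw [u]; rfl) (by rw [v]; show n = n + 1 - 1; omega))
  refine ⟨⟨(⟨e.1.1.val - 1, by omega⟩, ⟨e.1.2.val - 1, by omega⟩), ?_, ?_⟩, ?_⟩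
  · show e.1.1.val - 1 + 2 ≤ e.1.2.val - 1
    omega
  · show ¬(e.1.1.val - 1 = 0 ∧ e.1.2.val - 1 + 1 = n)
    omega
  · apply diag_ext
    · show e.1.1.val - 1 + 1 = e.1.1.val
      omega
    · show e.1.2.val - 1 + 1 = e.1.2.val
      omega

lemma euler_sum (n : ℕ) (hn : 3 ≤ n) :
    ∑ T ∈ Finset.univ.filter (fun T : Finset (Diag n) => IsTiling n T),
      (-1 : ℤ) ^ T.card = (-1 : ℤ) ^ (n - 3) := by
  induction n, hn using Nat.le_induction with
  | base =>
    have hE := diag3_empty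
    have huniv : (Finset.univ.filter (fun T : Finset (Diag 3) => IsTiling 3 T))
        = {(∅ : Finset (Diag 3))} := by
      ext T
      simp only [Finset.mem_filter, Finset.mem_univ, true_and, Finset.mem_singleton]
      constructor
      · intro _
        exact Finset.eq_empty_of_forall_notMem (fun d => (hE.false d).elim)
      · rintro rfl
        intro d hd
        simp at hd
    rw [huniv]
    simp
  | succ n hn IH =>
    have hn4 : 4 ≤ n + 1 := by omega
    rw [← Finset.sum_filter_add_sum_filter_not
      (Finset.univ.filter (fun T : Finset (Diag (n+1)) => IsTiling (n+1) T))
      (fun T => dstar (n+1) hn4 ∉ T), toggle_sum_zero hn4, zero_add]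
    -- bijection with tilings of the n-gon
    have hbij : ∑ T ∈ (Finset.univ.filter
          (fun T : Finset (Diag (n+1)) => IsTiling (n+1) T)).filter
          (fun T => ¬ dstar (n+1) hn4 ∉ T), (-1 : ℤ) ^ T.card
        = ∑ T' ∈ Finset.univ.filter (fun T' : Finset (Diag n) => IsTiling n T'),
          (-(1 : ℤ)) * (-1 : ℤ) ^ T'.card := by
      apply Finset.sum_bij'
        (i := fun T _ => Finset.univ.filter (fun e' : Diag n => dmap n e' ∈ T))
        (j := fun T' _ => insert (dstar (n+1) hn4) (T'.image (dmap n)))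
      · -- membership i
        intro T hT
        simp only [Finset.mem_filter, Finset.mem_univ, true_and, not_not] at hT ⊢
        intro d hd e he
        simp only [Finset.mem_filter, Finset.mem_univ, true_and] at hd he
        intro hcr
        exact hT.1 _ hd _ he (cross_dmap.2 hcr)
      · -- membership j
        intro T' hT'
        simp only [Finset.mem_filter, Finset.mem_univ, true_and, not_not] at hT' ⊢
        constructor
        · intro d hd e he
          rcases Finset.mem_insert.1 hd with rfl | hd <;>
            rcases Finset.mem_insert.1 he with rfl | he
          · intro hcr
            rcases hcr with ⟨u1, u2, u3⟩ | ⟨u1, u2, u3⟩ <;> omega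
          · rw [Finset.mem_image] at he
            obtain ⟨e', he', rfl⟩ := he
            exact (nocross_dstar_dmap hn4 e').1
          · rw [Finset.mem_image] at hd
            obtain ⟨d', hd', rfl⟩ := hd
            exact (nocross_dstar_dmap hn4 d').2
          · rw [Finset.mem_image] at hd he
            obtain ⟨d', hd', rfl⟩ := hd
            obtain ⟨e', he', rfl⟩ := he
            intro hcr
            exact hT' _ hd' _ he' (cross_dmap.1 hcr)
        · exact Finset.mem_insert_self _ _
      · -- left inverse
        intro T hT
        simp only [Finset.mem_filter, Finset.mem_univ, true_and, not_not] at hT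
        ext e
        simp only [Finset.mem_insert, Finset.mem_image, Finset.mem_filter,
          Finset.mem_univ, true_and]
        constructor
        · rintro (rfl | ⟨e', he', rfl⟩)
          · exact hT.2
          · exact he'
        · intro he
          by_cases hne : e = dstar (n+1) hn4
          · exact Or.inl hne
          · obtain ⟨e', rfl⟩ := mem_range_dmap hn4 hT.1 hT.2 he hne
            exact Or.inr ⟨e', he, rfl⟩
      · -- right inverse
        intro T' hT'
        ext e'
        simp only [Finset.mem_filter, Finset.mem_univ, true_and, Finset.mem_insert,
          Finset.mem_image]
        constructor
        · rintro (h | ⟨e'', he'', heq⟩)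
          · exact absurd h (dmap_ne_dstar hn4 e')
          · rwa [← dmap_inj heq]
        · intro h
          exact Or.inr ⟨e', h, rfl⟩
      · -- values
        intro T hT
        simp only [Finset.mem_filter, Finset.mem_univ, true_and, not_not] at hT
        have hcard : T.card = (Finset.univ.filter
            (fun e' : Diag n => dmap n e' ∈ T)).card + 1 := by
          have hTeq : T = insert (dstar (n+1) hn4)
              ((Finset.univ.filter (fun e' : Diag n => dmap n e' ∈ T)).image (dmap n)) := by
            ext e
            simp only [Finset.mem_insert, Finset.mem_image, Finset.mem_filter,
              Finset.mem_univ, true_and]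
            constructor
            · intro he
              by_cases hne : e = dstar (n+1) hn4
              · exact Or.inl hne
              · obtain ⟨e', rfl⟩ := mem_range_dmap hn4 hT.1 hT.2 he hne
                exact Or.inr ⟨e', he, rfl⟩
            · rintro (rfl | ⟨e', he', rfl⟩)
              · exact hT.2
              · exact he'
          have h1 : dstar (n+1) hn4 ∉
              (Finset.univ.filter (fun e' : Diag n => dmap n e' ∈ T)).image (dmap n) := by
            rw [Finset.mem_image]
            rintro ⟨e', _, heq⟩
            exact dmap_ne_dstar hn4 e' heq
          rw [congrArg Finset.card hTeq, Finset.card_insert_of_notMem h1,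
            Finset.card_image_of_injective _ (fun x y => dmap_inj)]
        rw [hcard, pow_succ]
        ring
    rw [hbij, ← Finset.mul_sum, IH]
    have h3 : n + 1 - 3 = (n - 3) + 1 := by omega
    rw [h3, pow_succ]
    ring

end Part3c
section Part4

open Polygon

lemma shape_card {n : ℕ} (T : Finset (Diag n)) :
    Multiset.card (shape n T) = (tiles n T).card := by
  rw [shape, Multiset.card_map]
  rfl

lemma shape_facts {n : ℕ} (hn : 3 ≤ n) (T : Finset (Diag n)) (hT : IsTiling n T) :
    Multiset.card (shape n T) = T.card + 1 ∧ (∀ x ∈ shape n T, 1 ≤ x) ∧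
      (shape n T).sum + 2 * (T.card + 1) = n + 2 * T.card := by
  obtain ⟨h1, h2, h3⟩ := tiles_facts hn T hT
  have hsum : (shape n T).sum = ∑ S ∈ tiles n T, (S.card - 2) := rfl
  refine ⟨by rw [shape_card, h1], ?_, ?_⟩
  · intro x hx
    rw [shape, Multiset.mem_map] at hx
    obtain ⟨S, hS, rfl⟩ := hx
    have := h2 S hS
    omega
  · have e1 : ∑ S ∈ tiles n T, (S.card - 2 + 2) = ∑ S ∈ tiles n T, S.card := by
      apply Finset.sum_congr rfl
      intro S hS
      have := h2 S hS
      omega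
    rw [Finset.sum_add_distrib, Finset.sum_const, smul_eq_mul] at e1
    rw [hsum]
    omega

/-- `F_r := Σ_{m=0}^{r} (-1)^m Σ_{ρ ⊢ m} a_{r+3}(\bar{ρ⁺}) = 1` for all
`r ≥ 0`, where `\bar{ρ⁺}` is the completion of `ρ⁺` by parts `1` to weight `r+1`. -/
theorem stmt15 (r : ℕ) :
    ∑ m ∈ Finset.range (r + 1), (-1 : ℤ) ^ m *
      ∑ ρ : Nat.Partition m, (Polygon.a (r + 3) (pcomp (r + 1) (pplus ρ.parts)) : ℤ)
      = 1 := by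
  classical
  set n := r + 3 with hndef
  have hn : 3 ≤ n := by omega
  set Ts : Finset (Finset (Diag n)) :=
    Finset.univ.filter (fun T : Finset (Diag n) => IsTiling n T) with hTs
  -- express a as a sum over tilings
  have ha : ∀ lam : Multiset ℕ, (Polygon.a n lam : ℤ)
      = ∑ T ∈ Ts, if shape n T = lam then 1 else 0 := by
    intro lam
    rw [hTs, Finset.sum_filter, Polygon.a, Finset.card_filter]
    simp only [Nat.cast_sum, Nat.cast_ite, Nat.cast_one, Nat.cast_zero]
    apply Finset.sum_congr rfl
    intro T _
    by_cases h1 : IsTiling n T <;> by_cases h2 : shape n T = lam <;>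
      simp [h1, h2]
  -- swap the partition sum with the tiling sum
  have hswap : ∀ m : ℕ,
      ∑ ρ : Nat.Partition m, (Polygon.a n (pcomp (r + 1) (pplus ρ.parts)) : ℤ)
      = ∑ T ∈ Ts, ((Finset.univ.filter
          (fun ρ : Nat.Partition m =>
            pcomp (r+1) (pplus ρ.parts) = shape n T)).card : ℤ) := by
    intro m
    calc ∑ ρ : Nat.Partition m, (Polygon.a n (pcomp (r + 1) (pplus ρ.parts)) : ℤ)
        = ∑ ρ : Nat.Partition m, ∑ T ∈ Ts,
            if shape n T = pcomp (r + 1) (pplus ρ.parts) then (1 : ℤ) else 0 :=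
          Finset.sum_congr rfl (fun ρ _ => ha _)
      _ = ∑ T ∈ Ts, ∑ ρ : Nat.Partition m,
            if shape n T = pcomp (r + 1) (pplus ρ.parts) then (1 : ℤ) else 0 :=
          Finset.sum_comm
      _ = _ := by
          apply Finset.sum_congr rfl
          intro T _
          rw [Finset.card_filter]
          simp only [Nat.cast_sum, Nat.cast_ite, Nat.cast_one, Nat.cast_zero]
          apply Finset.sum_congr rfl
          intro ρ _
          by_cases h : pcomp (r+1) (pplus ρ.parts) = shape n T
          · rw [if_pos h, if_pos h.symm]
          · rw [if_neg (fun hc => h hc.symm), if_neg h]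
  -- per-tiling evaluation
  have hmain : ∀ T ∈ Ts, ∑ m ∈ Finset.range (r + 1), (-1 : ℤ) ^ m *
      ((Finset.univ.filter (fun ρ : Nat.Partition m =>
        pcomp (r+1) (pplus ρ.parts) = shape n T)).card : ℤ)
      = (-1 : ℤ) ^ r * (-1 : ℤ) ^ T.card := by
    intro T hT
    rw [hTs, Finset.mem_filter] at hT
    obtain ⟨hcard, hpos, hsum2⟩ := shape_facts hn T hT.2
    have hsum : (shape n T).sum = r + 1 := by omega
    have hkr : T.card ≤ r := by
      have hcs : Multiset.card (shape n T) ≤ (shape n T).sum := by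
        have := Multiset.card_nsmul_le_sum (s := shape n T) (a := 1)
          (fun x hx => hpos x hx)
        simpa using this
      omega
    have heval : ∀ m ∈ Finset.range (r + 1), (-1 : ℤ) ^ m *
        ((Finset.univ.filter (fun ρ : Nat.Partition m =>
          pcomp (r+1) (pplus ρ.parts) = shape n T)).card : ℤ)
        = (-1 : ℤ) ^ m * (if m + Multiset.card (shape n T) = r + 1 then 1 else 0) := by
      intro m _
      rw [partition_count r m (shape n T) hpos hsum]
    rw [Finset.sum_congr rfl heval]
    rw [Finset.sum_eq_single_of_mem (r - T.card)
      (Finset.mem_range.2 (by omega))]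
    · rw [if_pos (by omega), mul_one]
      have hrk : r - T.card + T.card = r := by omega
      calc (-1 : ℤ) ^ (r - T.card)
          = (-1 : ℤ) ^ (r - T.card) * ((-1 : ℤ) ^ T.card * (-1 : ℤ) ^ T.card) := by
            rw [← pow_add, ← two_mul, pow_mul]
            norm_num
        _ = ((-1 : ℤ) ^ (r - T.card) * (-1 : ℤ) ^ T.card) * (-1 : ℤ) ^ T.card := by
            ring
        _ = (-1 : ℤ) ^ r * (-1 : ℤ) ^ T.card := by rw [← pow_add, hrk]
    · intro m hm hne
      rw [if_neg (by rw [hcard]; omega), mul_zero]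
  calc ∑ m ∈ Finset.range (r + 1), (-1 : ℤ) ^ m *
      ∑ ρ : Nat.Partition m, (Polygon.a n (pcomp (r + 1) (pplus ρ.parts)) : ℤ)
      = ∑ m ∈ Finset.range (r + 1), ∑ T ∈ Ts, (-1 : ℤ) ^ m *
        ((Finset.univ.filter (fun ρ : Nat.Partition m =>
          pcomp (r+1) (pplus ρ.parts) = shape n T)).card : ℤ) := by
        apply Finset.sum_congr rfl
        intro m _
        rw [hswap m, Finset.mul_sum]
    _ = ∑ T ∈ Ts, ∑ m ∈ Finset.range (r + 1), (-1 : ℤ) ^ m *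
        ((Finset.univ.filter (fun ρ : Nat.Partition m =>
          pcomp (r+1) (pplus ρ.parts) = shape n T)).card : ℤ) := Finset.sum_comm
    _ = ∑ T ∈ Ts, (-1 : ℤ) ^ r * (-1 : ℤ) ^ T.card := Finset.sum_congr rfl hmain
    _ = (-1 : ℤ) ^ r * ∑ T ∈ Ts, (-1 : ℤ) ^ T.card := by rw [← Finset.mul_sum]
    _ = (-1 : ℤ) ^ r * (-1 : ℤ) ^ (n - 3) := by rw [hTs, euler_sum n hn]
    _ = 1 := by
        have : n - 3 = r := by omega
        rw [this, ← pow_add]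
        have h2 : r + r = 2 * r := by ring
        rw [h2, pow_mul]
        norm_num

end Part4
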